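/- Let n, k, q, r be positive integers with k even, 2n = k·q + r, 0 ≤ r < k. Let (a_0,…,a_{k−1}) be any cyclic arrangement (permutation) of r copies of q+1 and k−r copies of q. Then there exists a block of cyclically consecutive entries summing to exactly n. Equivalently, defining f(i) = a_i + a_{i+1} + ⋯ + a_{i+k/2−1} (indices mod k), there exists an index j with f(j) = n. -/
import Mathlib

/-- Discrete intermediate value theorem for ℕ-valued sequences with steps ≤ 1. -/
lemma ivt_aux (F : ℕ → ℕ) (hF : ∀ i, F (i+1) ≤ F i + 1 ∧ F i ≤ F (i+1) + 1)
    (n : ℕ) : ∀ m, F 0 ≤ n → n ≤ F m → ∃ j ≤ m, F j = n := by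
  intro m
  induction m with
  | zero => intro h1 h2; exact ⟨0, le_refl _, le_antisymm h1 h2⟩
  | succ m ih =>
    intro h1 h2
    by_cases hc : n ≤ F m
    · obtain ⟨j, hj, hje⟩ := ih h1 hc
      exact ⟨j, hj.trans (Nat.le_succ m), hje⟩
    · push_neg at hc
      exact ⟨m+1, le_refl _, le_antisymm ((hF m).1.trans hc) h2⟩

theorem stmt_9 (n k q r : ℕ) (hn : 0 < n) (hq : 0 < q) (hr0 : 0 < r)
    (hke : Even k) (hk : 0 < k) (h2n : 2 * n = k * q + r) (hr : r < k)
    (a : ℕ → ℕ)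
    (hval : ∀ i, i < k → a i = q ∨ a i = q + 1)
    (hcard : ((Finset.range k).filter (fun i => a i = q + 1)).card = r) :
    ∃ j, j < k ∧ (∑ t ∈ Finset.range (k / 2), a ((j + t) % k)) = n := by
  classical
  obtain ⟨m, hm⟩ := hke
  have hmk : k / 2 = m := by omega
  have hm0 : 0 < m := by omega
  have hmk' : m < k := by omega
  set F : ℕ → ℕ := fun j => ∑ t ∈ Finset.range m, a ((j + t) % k) with hFdef
  -- total sum
  have hsum : ∑ i ∈ Finset.range k, a i = k * q + r := by
    rw [← Finset.sum_filter_add_sum_filter_not (Finset.range k) (fun i => a i = q+1)]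
    have h1 : ∑ i ∈ (Finset.range k).filter (fun i => a i = q+1), a i = r * (q+1) := by
      rw [Finset.sum_congr rfl (fun i hi => (Finset.mem_filter.mp hi).2), Finset.sum_const,
        hcard, smul_eq_mul]
    have hcard2 : ((Finset.range k).filter (fun i => ¬ a i = q+1)).card = k - r := by
      have := Finset.card_filter_add_card_filter_not (s := Finset.range k)
        (p := fun i => a i = q+1)
      simp only [Finset.card_range, hcard] at this
      omega
    have h2 : ∑ i ∈ (Finset.range k).filter (fun i => ¬ a i = q+1), a i = (k - r) * q := by
      rw [Finset.sum_congr rfl (fun i hi => ?_), Finset.sum_const, hcard2, smul_eq_mul]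
      have hi' := Finset.mem_filter.mp hi
      rcases hval i (Finset.mem_range.mp hi'.1) with h | h
      · exact h
      · exact absurd h hi'.2
    rw [h1, h2]
    have hk' : r + (k - r) = k := Nat.add_sub_cancel' hr.le
    calc r*(q+1) + (k-r)*q = (r + (k-r))*q + r := by ring
      _ = k*q + r := by rw [hk']
  -- F 0 + F m = 2n
  have hFsum : F 0 + F m = 2 * n := by
    have e0 : F 0 = ∑ t ∈ Finset.range m, a t :=
      Finset.sum_congr rfl (fun t ht => by
        rw [Nat.zero_add, Nat.mod_eq_of_lt (lt_of_lt_of_le (Finset.mem_range.mp ht) hmk'.le)])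
    have e1 : F m = ∑ t ∈ Finset.range m, a (m + t) :=
      Finset.sum_congr rfl (fun t ht => by
        rw [Nat.mod_eq_of_lt (by have := Finset.mem_range.mp ht; omega)])
    have e2 : ∑ i ∈ Finset.range k, a i
        = ∑ t ∈ Finset.range m, a t + ∑ t ∈ Finset.range m, a (m + t) := by
      rw [hm, Finset.sum_range_add]
    rw [e0, e1, ← e2, hsum, h2n]
  -- step condition
  have hstep : ∀ i, F (i+1) ≤ F i + 1 ∧ F i ≤ F (i+1) + 1 := by
    intro i
    obtain ⟨s, hs⟩ : ∃ s, m = s + 1 := ⟨m - 1, by omega⟩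
    have heq : F (i+1) + a (i % k) = F i + a ((i+m) % k) := by
      have hFi : F i = (∑ t ∈ Finset.range s, a ((i + (t+1)) % k)) + a ((i + 0) % k) := by
        rw [hFdef]; simp only [hs]; exact Finset.sum_range_succ' _ s
      have hFi1 : F (i+1) = (∑ t ∈ Finset.range s, a ((i+1 + t) % k)) + a ((i+1+s) % k) := by
        rw [hFdef]; simp only [hs]; exact Finset.sum_range_succ _ s
      have hc : ∑ t ∈ Finset.range s, a ((i+1 + t) % k)
          = ∑ t ∈ Finset.range s, a ((i + (t+1)) % k) :=
        Finset.sum_congr rfl (fun t _ => by ring_nf)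
      rw [hFi, hFi1, hc]
      have : i + 1 + s = i + m := by omega
      rw [this, Nat.add_zero]
      ring
    have ha1 := hval (i % k) (Nat.mod_lt _ hk)
    have ha2 := hval ((i+m) % k) (Nat.mod_lt _ hk)
    rcases ha1 with h1 | h1 <;> rcases ha2 with h2 | h2 <;> omega
  -- case split
  have main : ∃ j ≤ m, F j = n := by
    by_cases hc : F 0 ≤ n
    · exact ivt_aux F hstep n m hc (by omega)
    · push_neg at hc
      have hFm : F m ≤ n := by omega
      set G : ℕ → ℕ := fun j => F (m - j) with hGdef
      have hGstep : ∀ i, G (i+1) ≤ G i + 1 ∧ G i ≤ G (i+1) + 1 := by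
        intro i
        by_cases hi : i < m
        · have h1 : m - i = (m - (i+1)) + 1 := by omega
          have := hstep (m - (i+1))
          simp only [hGdef]
          rw [h1] at *
          omega
        · have h1 : m - i = 0 := by omega
          have h2 : m - (i+1) = 0 := by omega
          simp only [hGdef, h1, h2]
          omega
      obtain ⟨j, hj, hje⟩ := ivt_aux G hGstep n m hFm (by simp only [hGdef, Nat.sub_self]; omega)
      exact ⟨m - j, by omega, hje⟩
  obtain ⟨j, hj, hje⟩ := main
  exact ⟨j, by omega, by rw [hmk]; exact hje⟩
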